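/- Let v ∈ R^m and let F = {r ∈ Z^m : ⟨v,r⟩ = 0} be the subgroup of integer vectors orthogonal to v. Then the rank of F as a free Z-module equals m minus the dimension over Q of the Q-span of the components v^1,...,v^m of v. -/

import Mathlib

/-- For `v ∈ ℝ^m`, the rank of the free `ℤ`-module
`F = {r ∈ ℤ^m : ⟨v, r⟩ = 0}` equals `m` minus the dimension over `ℚ` of the
`ℚ`-span of the components of `v`. -/
theorem rank_integer_orthogonal_complement (m : ℕ) (v : Fin m → ℝ)
    (F : Submodule ℤ (Fin m → ℤ))
    (hF : ∀ r : Fin m → ℤ, r ∈ F ↔ ∑ i, v i * (r i : ℝ) = 0) :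
    Module.finrank ℤ F = m - Module.finrank ℚ (Submodule.span ℚ (Set.range v)) := by
  classical
  set f : (Fin m → ℚ) →ₗ[ℚ] ℝ := Fintype.linearCombination ℚ v with hfdef
  have hf : ∀ q : Fin m → ℚ, f q = ∑ i, v i * (q i : ℝ) := by
    intro q
    rw [hfdef, Fintype.linearCombination_apply]
    refine Finset.sum_congr rfl fun i _ => ?_
    rw [Rat.smul_def, mul_comm]
  have hrange : LinearMap.range f = Submodule.span ℚ (Set.range v) :=
    Fintype.range_linearCombination ..
  -- the cast map from ℤ^m to ℚ^m
  let j : (Fin m → ℤ) →ₗ[ℤ] (Fin m → ℚ) :=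
    { toFun := fun r i => (r i : ℚ)
      map_add' := by intro a b; funext i; simp
      map_smul' := by intro z a; funext i; simp }
  have hj : Function.Injective j := by
    intro a b h
    funext i
    have := congrFun h i
    simpa [j] using this
  have hmem : ∀ r : Fin m → ℤ, r ∈ F ↔ j r ∈ LinearMap.ker f := by
    intro r
    rw [hF, LinearMap.mem_ker, hf]
    norm_cast
  -- a ℤ-basis of F
  let b := Module.Free.chooseBasis ℤ F
  set ι := Module.Free.ChooseBasisIndex ℤ F
  have hcard : Module.finrank ℤ F = Fintype.card ι :=
    Module.finrank_eq_card_chooseBasisIndex ℤ F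
  -- its image in ℚ^m
  set c : ι → (Fin m → ℚ) := fun k => j ((b k : Fin m → ℤ)) with hc
  have hindep : LinearIndependent ℚ c := by
    rw [← LinearIndependent.iff_fractionRing ℤ ℚ]
    have h1 : LinearIndependent ℤ (fun k => (b k : Fin m → ℤ)) :=
      b.linearIndependent.map' F.subtype F.ker_subtype
    exact h1.map' j (LinearMap.ker_eq_bot.mpr hj)
  have hsub : ∀ k, c k ∈ LinearMap.ker f := fun k => (hmem _).mp (b k).2
  have hspan : Submodule.span ℚ (Set.range c) = LinearMap.ker f := by
    apply le_antisymm
    · rw [Submodule.span_le]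
      rintro _ ⟨k, rfl⟩
      exact hsub k
    · intro q hq
      -- clear denominators
      obtain ⟨d, hd⟩ := IsLocalization.exist_integer_multiples
        (nonZeroDivisors ℤ) Finset.univ q
      choose r hr using fun i => hd i (Finset.mem_univ i)
      have hrq : ∀ i, (r i : ℚ) = (d : ℤ) • q i := hr
      have hrF : (fun i => r i) ∈ F := by
        rw [hmem]
        have : j (fun i => r i) = (d : ℤ) • q := by
          funext i
          show (r i : ℚ) = ((d : ℤ) • q) i
          rw [Pi.smul_apply]; exact hrq i
        rw [this]
        exact Submodule.smul_of_tower_mem _ _ hq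
      -- j r lies in the ℚ-span of c
      have hjr : j (fun i => r i) ∈ Submodule.span ℚ (Set.range c) := by
        have hmemF : (⟨fun i => r i, hrF⟩ : F) ∈
            Submodule.span ℤ (Set.range (b : ι → F)) := by
          rw [b.span_eq]; trivial
        have := Submodule.mem_map_of_mem (f := (j.comp F.subtype)) hmemF
        rw [Submodule.map_span, ← Set.range_comp] at this
        have hle : Submodule.span ℤ (Set.range (j.comp F.subtype ∘ b)) ≤
            (Submodule.span ℚ (Set.range c)).restrictScalars ℤ := by
          rw [Submodule.span_le]
          rintro _ ⟨k, rfl⟩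
          exact Submodule.subset_span ⟨k, rfl⟩
        exact hle this
      have hd0 : ((d : ℤ) : ℚ) ≠ 0 := by
        exact_mod_cast nonZeroDivisors.coe_ne_zero d
      have : q = ((d : ℤ) : ℚ)⁻¹ • j (fun i => r i) := by
        funext i
        have : j (fun i => r i) i = ((d : ℤ) : ℚ) * q i := by
          simpa [j, zsmul_eq_mul] using hrq i
        rw [Pi.smul_apply, this, smul_eq_mul, ← mul_assoc, inv_mul_cancel₀ hd0, one_mul]
      rw [this]
      exact Submodule.smul_mem _ _ hjr
  -- finrank of the kernel over ℚ
  have hk : Module.finrank ℚ (LinearMap.ker f) = Fintype.card ι := by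
    rw [← hspan]
    exact finrank_span_eq_card hindep
  have hrn := LinearMap.finrank_range_add_finrank_ker f
  rw [Module.finrank_fintype_fun_eq_card, Fintype.card_fin, hrange, hk] at hrn
  omega
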